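/- Let Ψ₁, Ψ₂ be real numbers with Ψ₂ ≥ 0, and set μ₊ = (−Ψ₁ + √(Ψ₁² + Ψ₂))/2 and μ₋ = (−Ψ₁ − √(Ψ₁² + Ψ₂))/2. Then μ₊ and μ₋ are exactly the stationary solutions of the equation μ′ = 4μ(μ + Ψ₁) − Ψ₂ (i.e. 4μ₊(μ₊ + Ψ₁) − Ψ₂ = 0 and 4μ₋(μ₋ + Ψ₁) − Ψ₂ = 0), and μ₊ is an attractor as t → −∞: if μ : (−∞, 0] → ℝ is differentiable with μ′(t) = 4μ(t)(μ(t) + Ψ₁) − Ψ₂ for all t ≤ 0 and μ(0) > μ₋, then μ(t) → μ₊ as t → −∞. -/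

import Mathlib

open Set Filter

lemma exp_rep_aux {a h : ℝ → ℝ} (ha : Continuous a)
    (hh : ∀ t ≤ (0:ℝ), HasDerivAt h (a t * h t) t) :
    ∀ t ≤ (0:ℝ), h t = h 0 * Real.exp (∫ s in (0:ℝ)..t, a s) := by
  intro t ht
  set A : ℝ → ℝ := fun u => ∫ s in (0:ℝ)..u, a s with hAdef
  have hA' : ∀ u : ℝ, HasDerivAt A (a u) u := fun u =>
    (ha.integral_hasStrictDerivAt 0 u).hasDerivAt
  set G : ℝ → ℝ := fun u => h u * Real.exp (-(A u)) with hGdef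
  have hG' : ∀ u ≤ (0:ℝ), HasDerivAt G 0 u := by
    intro u hu
    have h1 := (hh u hu).mul ((hA' u).neg.exp)
    have h2 : HasDerivAt G (a u * h u * Real.exp (-A u) + h u * (Real.exp (-A u) * -a u)) u := h1
    convert h2 using 1
    ring
  have hcont : ContinuousOn G (Icc t 0) := fun x hx =>
    ((hG' x hx.2).continuousAt).continuousWithinAt
  have hconst := constant_of_has_deriv_right_zero hcont
    (fun x hx => ((hG' x hx.2.le).hasDerivWithinAt))
  have h0t : G 0 = G t := hconst 0 ⟨ht, le_refl 0⟩
  have hA0 : A 0 = 0 := intervalIntegral.integral_same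
  have key : h t * Real.exp (-(A t)) = h 0 := by
    simpa [hGdef, hA0] using h0t.symm
  rw [← key, mul_assoc, ← Real.exp_add]
  simp [A]

lemma sign_rep_aux {a h : ℝ → ℝ} (ha : Continuous a)
    (hh : ∀ t ≤ (0:ℝ), HasDerivAt h (a t * h t) t) :
    ∀ t ≤ (0:ℝ), ∃ E : ℝ, 0 < E ∧ h t = h 0 * E := fun t ht =>
  ⟨Real.exp (∫ s in (0:ℝ)..t, a s), Real.exp_pos _, exp_rep_aux ha hh t ht⟩

/-- for `Ψ₂ ≥ 0`, `μ₊ = (−Ψ₁ + √(Ψ₁² + Ψ₂))/2` and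
`μ₋ = (−Ψ₁ − √(Ψ₁² + Ψ₂))/2` are exactly the stationary solutions of
`μ′ = 4μ(μ + Ψ₁) − Ψ₂`, and `μ₊` is an attractor as `t → −∞`: any solution on
`(−∞, 0]` with `μ(0) > μ₋` converges to `μ₊` as `t → −∞`. -/
theorem stationary_solutions_and_attractor
    (Ψ₁ Ψ₂ : ℝ) (hΨ₂ : 0 ≤ Ψ₂)
    (μp μm : ℝ)
    (hμp : μp = (-Ψ₁ + Real.sqrt (Ψ₁ ^ 2 + Ψ₂)) / 2)
    (hμm : μm = (-Ψ₁ - Real.sqrt (Ψ₁ ^ 2 + Ψ₂)) / 2) :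
    (4 * μp * (μp + Ψ₁) - Ψ₂ = 0) ∧
    (4 * μm * (μm + Ψ₁) - Ψ₂ = 0) ∧
    (∀ x : ℝ, 4 * x * (x + Ψ₁) - Ψ₂ = 0 → x = μp ∨ x = μm) ∧
    (∀ μ : ℝ → ℝ,
      (∀ t ≤ (0 : ℝ), HasDerivAt μ (4 * μ t * (μ t + Ψ₁) - Ψ₂) t) →
      μm < μ 0 →
      Filter.Tendsto μ Filter.atBot (nhds μp)) := by
  have hsq : Real.sqrt (Ψ₁ ^ 2 + Ψ₂) ^ 2 = Ψ₁ ^ 2 + Ψ₂ :=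
    Real.sq_sqrt (by positivity)
  have fact : ∀ x : ℝ, 4 * x * (x + Ψ₁) - Ψ₂ = 4 * (x - μp) * (x - μm) := by
    intro x
    rw [hμp, hμm]
    nlinarith [hsq]
  have hmpm : μm ≤ μp := by
    rw [hμp, hμm]
    have := Real.sqrt_nonneg (Ψ₁ ^ 2 + Ψ₂)
    linarith
  refine ⟨by rw [fact]; ring, by rw [fact]; ring, ?_, ?_⟩
  · intro x hx
    rw [fact] at hx
    rcases mul_eq_zero.1 hx with h | h
    · rcases mul_eq_zero.1 h with h | h
      · norm_num at h
      · exact Or.inl (by linarith [sub_eq_zero.1 h])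
    · exact Or.inr (by linarith [sub_eq_zero.1 h])
  · intro μ hder h0
    have hder' : ∀ t ≤ (0:ℝ), HasDerivAt μ (4 * (μ t - μp) * (μ t - μm)) t := by
      intro t ht
      have := hder t ht
      rwa [fact (μ t)] at this
    have hμcont : ∀ t ≤ (0:ℝ), ContinuousAt μ t := fun t ht => (hder t ht).continuousAt
    have hminc : Continuous (fun t : ℝ => min t 0) := continuous_id.min continuous_const
    have hmincont : Continuous (fun t : ℝ => μ (min t 0)) := by
      rw [continuous_iff_continuousAt]
      intro t
      exact ContinuousAt.comp (hμcont (min t 0) (min_le_right t 0)) hminc.continuousAt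
    -- μ stays above μm
    have hrep : ∀ t ≤ (0:ℝ), ∃ E : ℝ, 0 < E ∧ μ t - μm = (μ 0 - μm) * E :=
      sign_rep_aux (a := fun u => 4 * (μ (min u 0) - μp))
        (h := fun u => μ u - μm)
        (continuous_const.mul (hmincont.sub continuous_const))
        (by
          intro u hu
          have key : HasDerivAt (fun x => μ x - μm)
              (4 * (μ (min u 0) - μp) * (μ u - μm)) u := by
            rw [min_eq_left hu]
            exact (hder' u hu).sub_const μm
          exact key)
    have hab : ∀ t ≤ (0:ℝ), μm < μ t := by
      intro t ht
      obtain ⟨E, hE, heq⟩ := hrep t ht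
      nlinarith
    have krep : ∀ t ≤ (0:ℝ), ∃ E : ℝ, 0 < E ∧ μ t - μp = (μ 0 - μp) * E :=
      sign_rep_aux (a := fun u => 4 * (μ (min u 0) - μm))
        (h := fun u => μ u - μp)
        (continuous_const.mul (hmincont.sub continuous_const))
        (by
          intro u hu
          have key : HasDerivAt (fun x => μ x - μp)
              (4 * (μ (min u 0) - μm) * (μ u - μp)) u := by
            rw [min_eq_left hu]
            have := (hder' u hu).sub_const μp
            rw [show 4 * (μ u - μm) * (μ u - μp) = 4 * (μ u - μp) * (μ u - μm) by ring]
            exact this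
          exact key)
    have heventually : (fun t : ℝ => μ (min t 0)) =ᶠ[atBot] μ := by
      filter_upwards [eventually_le_atBot (0:ℝ)] with t ht
      rw [min_eq_left ht]
    rcases lt_trichotomy (μ 0) μp with hk | hk | hk
    · -- μ 0 < μp : solution in (μm, μp)
      have hlt : ∀ t ≤ (0:ℝ), μ t < μp := by
        intro t ht
        obtain ⟨E, hE, heq⟩ := krep t ht
        nlinarith
      have hAnti : AntitoneOn μ (Iic 0) := by
        apply antitoneOn_of_deriv_nonpos (convex_Iic 0)
        · exact fun x hx => (hμcont x hx).continuousWithinAt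
        · intro x hx
          rw [interior_Iic] at hx
          exact ((hder' x (le_of_lt hx)).differentiableAt).differentiableWithinAt
        · intro x hx
          rw [interior_Iic] at hx
          replace hx : x ≤ 0 := le_of_lt hx
          rw [(hder' x hx).deriv]
          nlinarith [mul_nonneg (sub_nonneg.2 (hab x hx).le) (sub_nonneg.2 (hlt x hx).le)]
      set ν : ℝ → ℝ := fun t => μ (min t 0) with hν
      have hνanti : Antitone ν := fun s t hst =>
        hAnti (min_le_right s 0) (min_le_right t 0) (min_le_min hst le_rfl)
      have hbdd : BddAbove (range ν) := by
        refine ⟨μp, ?_⟩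
        rintro y ⟨t, rfl⟩
        exact (hlt (min t 0) (min_le_right t 0)).le
      have htend := tendsto_atBot_ciSup hνanti hbdd
      set L : ℝ := ⨆ t, ν t with hL
      have hνle : ∀ t, ν t ≤ L := fun t => le_ciSup hbdd t
      have hLle : L ≤ μp := ciSup_le fun t => (hlt (min t 0) (min_le_right t 0)).le
      have hμ0L : μ 0 ≤ L := by
        have := hνle 0
        simpa [hν, min_self] using this
      have hLeq : L = μp := by
        by_contra hne
        have hLlt : L < μp := lt_of_le_of_ne hLle hne
        set c : ℝ := 4 * (μp - L) * (μ 0 - μm) with hc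
        have hcpos : 0 < c := by
          rw [hc]
          nlinarith [mul_pos (sub_pos.2 hLlt) (sub_pos.2 h0)]
        have hgAnti : AntitoneOn (fun t => μ t + c * t) (Iic 0) := by
          apply antitoneOn_of_deriv_nonpos (convex_Iic 0)
          · exact ContinuousOn.add (fun x hx => (hμcont x hx).continuousWithinAt)
              (continuous_const.mul continuous_id).continuousOn
          · intro x hx
            rw [interior_Iic] at hx
            exact (((hder' x (le_of_lt hx)).add
              ((hasDerivAt_id x).const_mul c)).differentiableAt).differentiableWithinAt
          · intro x hx
            rw [interior_Iic] at hx
            replace hx : x ≤ 0 := le_of_lt hx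
            have hd : HasDerivAt (fun t => μ t + c * t)
                (4 * (μ x - μp) * (μ x - μm) + c * 1) x :=
              (hder' x hx).add ((hasDerivAt_id x).const_mul c)
            rw [hd.deriv]
            have h1 : μ x ≤ L := by
              have := hνle x
              simpa [hν, min_eq_left hx] using this
            have h2 : μ 0 ≤ μ x := hAnti (mem_Iic.2 hx) self_mem_Iic hx
            rw [hc]
            nlinarith [mul_nonneg (by linarith : (0:ℝ) ≤ L - μ x)
                (by linarith [hab x hx] : (0:ℝ) ≤ μ x - μm),
              mul_nonneg (by linarith : (0:ℝ) ≤ μp - L)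
                (by linarith : (0:ℝ) ≤ μ x - μ 0)]
        set t₀ : ℝ := (μ 0 - L) / c - 1 with ht₀
        have ht₀le : t₀ ≤ 0 := by
          have : (μ 0 - L) / c ≤ 0 :=
            div_nonpos_iff.2 (Or.inr ⟨by linarith, hcpos.le⟩)
          rw [ht₀]; linarith
        have hg := hgAnti (mem_Iic.2 ht₀le) self_mem_Iic ht₀le
        have hμt₀ : μ t₀ ≤ L := by
          have := hνle t₀
          simpa [hν, min_eq_left ht₀le] using this
        have hct₀ : c * t₀ = (μ 0 - L) - c := by
          rw [ht₀]
          field_simp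
        simp only [mul_zero, add_zero] at hg
        rw [hct₀] at hg
        linarith
      rw [← hLeq]
      exact htend.congr' heventually
    · -- μ 0 = μp : constant solution
      have hconst : ∀ t ≤ (0:ℝ), μ t = μp := by
        intro t ht
        obtain ⟨E, hE, heq⟩ := krep t ht
        rw [hk] at heq
        simp at heq
        linarith
      have hev : (fun _ : ℝ => μp) =ᶠ[atBot] μ := by
        filter_upwards [eventually_le_atBot (0:ℝ)] with t ht
        exact (hconst t ht).symm
      exact tendsto_const_nhds.congr' hev
    · -- μp < μ 0 : solution above μp
      have hgt : ∀ t ≤ (0:ℝ), μp < μ t := by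
        intro t ht
        obtain ⟨E, hE, heq⟩ := krep t ht
        nlinarith
      have hMono : MonotoneOn μ (Iic 0) := by
        apply monotoneOn_of_deriv_nonneg (convex_Iic 0)
        · exact fun x hx => (hμcont x hx).continuousWithinAt
        · intro x hx
          rw [interior_Iic] at hx
          exact ((hder' x (le_of_lt hx)).differentiableAt).differentiableWithinAt
        · intro x hx
          rw [interior_Iic] at hx
          replace hx : x ≤ 0 := le_of_lt hx
          rw [(hder' x hx).deriv]
          nlinarith [mul_nonneg (sub_nonneg.2 (hgt x hx).le) (sub_nonneg.2 (hab x hx).le)]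
      set ν : ℝ → ℝ := fun t => μ (min t 0) with hν
      have hνmono : Monotone ν := fun s t hst =>
        hMono (min_le_right s 0) (min_le_right t 0) (min_le_min hst le_rfl)
      have hbdd : BddBelow (range ν) := by
        refine ⟨μp, ?_⟩
        rintro y ⟨t, rfl⟩
        exact (hgt (min t 0) (min_le_right t 0)).le
      have htend := tendsto_atBot_ciInf hνmono hbdd
      set L : ℝ := ⨅ t, ν t with hL
      have hνge : ∀ t, L ≤ ν t := fun t => ciInf_le hbdd t
      have hLge : μp ≤ L := le_ciInf fun t => (hgt (min t 0) (min_le_right t 0)).le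
      have hμ0L : L ≤ μ 0 := by
        have := hνge 0
        simpa [hν, min_self] using this
      have hLeq : L = μp := by
        by_contra hne
        have hLgt : μp < L := lt_of_le_of_ne hLge (Ne.symm hne)
        have hLm : μm < L := lt_of_le_of_lt hmpm hLgt
        set c : ℝ := 4 * (L - μp) * (L - μm) with hc
        have hcpos : 0 < c := by
          rw [hc]
          nlinarith [mul_pos (sub_pos.2 hLgt) (sub_pos.2 hLm)]
        have hgMono : MonotoneOn (fun t => μ t - c * t) (Iic 0) := by
          apply monotoneOn_of_deriv_nonneg (convex_Iic 0)
          · exact ContinuousOn.sub (fun x hx => (hμcont x hx).continuousWithinAt)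
              (continuous_const.mul continuous_id).continuousOn
          · intro x hx
            rw [interior_Iic] at hx
            exact (((hder' x (le_of_lt hx)).sub
              ((hasDerivAt_id x).const_mul c)).differentiableAt).differentiableWithinAt
          · intro x hx
            rw [interior_Iic] at hx
            replace hx : x ≤ 0 := le_of_lt hx
            have hd : HasDerivAt (fun t => μ t - c * t)
                (4 * (μ x - μp) * (μ x - μm) - c * 1) x :=
              (hder' x hx).sub ((hasDerivAt_id x).const_mul c)
            rw [hd.deriv]
            have h1 : L ≤ μ x := by
              have := hνge x
              simpa [hν, min_eq_left hx] using this
            rw [hc]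
            nlinarith [mul_nonneg (by linarith : (0:ℝ) ≤ μ x - L)
                (by linarith [hab x hx] : (0:ℝ) ≤ μ x - μm),
              mul_nonneg (by linarith : (0:ℝ) ≤ L - μp)
                (by linarith : (0:ℝ) ≤ μ x - L)]
        set t₀ : ℝ := (L - μ 0) / c - 1 with ht₀
        have ht₀le : t₀ ≤ 0 := by
          have : (L - μ 0) / c ≤ 0 :=
            div_nonpos_iff.2 (Or.inr ⟨by linarith, hcpos.le⟩)
          rw [ht₀]; linarith
        have hg := hgMono (mem_Iic.2 ht₀le) self_mem_Iic ht₀le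
        have hμt₀ : L ≤ μ t₀ := by
          have := hνge t₀
          simpa [hν, min_eq_left ht₀le] using this
        have hct₀ : c * t₀ = (L - μ 0) - c := by
          rw [ht₀]
          field_simp
        simp only [mul_zero, sub_zero] at hg
        rw [hct₀] at hg
        linarith
      rw [← hLeq]
      exact htend.congr' heventually
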